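/- Let β, b ∈ ℕ^m and A ∈ ℕ^{m×n} with columns A_1,…,A_n satisfy b ≤ β and A_k ≤ β for all 1 ≤ k ≤ n. Then the linear system Ax = b has a solution x ∈ ℕ^n if and only if there exists a real vector 𝐲 ≥ 0 (indexed by the pairs (k,u), 1 ≤ k ≤ n, u ∈ ℕ^m, u ≤ β − A_k) such that Θ𝐲 = 𝐛, where Θ[w;(k,u)] = −1 if w = u, +1 if w = u + A_k, 0 otherwise, and 𝐛[w] = (1 if w = b else 0) − (1 if w = 0 else 0), for all w ∈ ℕ^m with w ≤ β. -/

import Mathlib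

/-- Row index set: vectors `w ∈ ℕ^m` with `w ≤ β` (entrywise). -/
abbrev RowIdx (m : ℕ) (β : Fin m → ℕ) : Type := ∀ j : Fin m, Fin (β j + 1)

/-- Column index set: pairs `(k, u)` with `1 ≤ k ≤ n` and `u ∈ ℕ^m`, `u ≤ β - A_k`. -/
abbrev ColIdx (m n : ℕ) (β : Fin m → ℕ) (A : Matrix (Fin m) (Fin n) ℕ) : Type :=
  Σ k : Fin n, ∀ j : Fin m, Fin (β j - A j k + 1)

/-- The network matrix `Θ`: `Θ[w;(k,u)] = -1` if `w = u`, `+1` if `w = u + A_k`,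
and `0` otherwise. -/
noncomputable def theta (m n : ℕ) (β : Fin m → ℕ) (A : Matrix (Fin m) (Fin n) ℕ) :
    Matrix (RowIdx m β) (ColIdx m n β A) ℝ := Matrix.of fun w c =>
  if (fun j => (w j : ℕ)) = (fun j => (c.2 j : ℕ)) then -1
  else if (fun j => (w j : ℕ)) = (fun j => (c.2 j : ℕ) + A j c.1) then 1 else 0

/-- The vector `𝐛`: `𝐛[w] = (1 if w = b else 0) - (1 if w = 0 else 0)`. -/
noncomputable def bvec (m : ℕ) (β b : Fin m → ℕ) : RowIdx m β → ℝ := fun w =>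
  (if (fun j => (w j : ℕ)) = b then 1 else 0)
    - (if (fun j => (w j : ℕ)) = (fun _ => (0 : ℕ)) then 1 else 0)

section Aux
variable {m n : ℕ} {β : Fin m → ℕ} {A : Matrix (Fin m) (Fin n) ℕ}

def rowOf (β : Fin m → ℕ) (g : Fin m → ℕ) (hg : ∀ j, g j ≤ β j) : RowIdx m β :=
  fun j => ⟨g j, Nat.lt_succ_of_le (hg j)⟩

lemma coe_rowOf (g : Fin m → ℕ) (hg : ∀ j, g j ≤ β j) :
    (fun j => ((rowOf β g hg j : ℕ))) = g := rfl

lemma coe_eq_iff (w : RowIdx m β) (g : Fin m → ℕ) (hg : ∀ j, g j ≤ β j) :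
    ((fun j => ((w j : ℕ))) = g) ↔ w = rowOf β g hg := by
  constructor
  · intro h; funext j; exact Fin.ext (congrFun h j)
  · rintro rfl; rfl

lemma sum_if_coe (g : Fin m → ℕ) (hg : ∀ j, g j ≤ β j) (r : ℝ) :
    ∑ w : RowIdx m β, (if (fun j => ((w j : ℕ))) = g then r else 0) = r := by
  rw [Finset.sum_congr rfl fun w _ => if_congr (coe_eq_iff w g hg) rfl rfl]
  simp

end Aux

lemma forward_aux (m n : ℕ) (A : Matrix (Fin m) (Fin n) ℕ) (β : Fin m → ℕ)
    (hA : ∀ k j, A j k ≤ β j) :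
    ∀ (s : ℕ) (x : Fin n → ℕ), (∑ k, x k) = s → (∀ j, ∑ k, A j k * x k ≤ β j) →
    ∃ y : ColIdx m n β A → ℝ, (∀ c, 0 ≤ y c) ∧
      (theta m n β A).mulVec y = bvec m β (fun j => ∑ k, A j k * x k) := by
  intro s
  induction s with
  | zero =>
    intro x hx _
    refine ⟨0, fun c => le_refl 0, ?_⟩
    have hx0 : ∀ k ∈ Finset.univ, x k = 0 := Finset.sum_eq_zero_iff.mp hx
    have hbb : (fun j => ∑ k, A j k * x k) = (fun _ : Fin m => (0 : ℕ)) := by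
      funext j
      exact Finset.sum_eq_zero fun k hk => by rw [hx0 k hk, mul_zero]
    rw [hbb]
    funext w
    simp [Matrix.mulVec, bvec]
  | succ s IH =>
    intro x hx hβ
    obtain ⟨k0, hk0⟩ : ∃ k0, x k0 ≠ 0 := by
      by_contra h
      push_neg at h
      simp [h] at hx
    set x' : Fin n → ℕ := fun k => if k = k0 then x k - 1 else x k with hx'def
    have hsplit : ∀ (f : Fin n → ℕ), ∑ k, f k = f k0 + ∑ k ∈ Finset.univ.erase k0, f k :=
      fun f => (Finset.add_sum_erase _ f (Finset.mem_univ k0)).symm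
    have herase : ∀ (g : Fin n → ℕ), ∑ k ∈ Finset.univ.erase k0, g k * x' k
        = ∑ k ∈ Finset.univ.erase k0, g k * x k := by
      intro g
      refine Finset.sum_congr rfl fun k hk => ?_
      have : k ≠ k0 := Finset.ne_of_mem_erase hk
      simp [hx'def, this]
    have hx'sum : ∑ k, x' k = s := by
      have h1 := hsplit x'
      have h2 := hsplit x
      have h3 : ∑ k ∈ Finset.univ.erase k0, x' k = ∑ k ∈ Finset.univ.erase k0, x k := by
        refine Finset.sum_congr rfl fun k hk => ?_
        have : k ≠ k0 := Finset.ne_of_mem_erase hk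
        simp [hx'def, this]
      have h4 : x' k0 = x k0 - 1 := by simp [hx'def]
      omega
    have key : ∀ j, ∑ k, A j k * x k = A j k0 + ∑ k, A j k * x' k := by
      intro j
      rw [hsplit (fun k => A j k * x k), hsplit (fun k => A j k * x' k), herase (A j)]
      have h4 : x' k0 = x k0 - 1 := by simp [hx'def]
      have h5 : A j k0 * x k0 = A j k0 * (x k0 - 1) + A j k0 := by
        have hx1 : x k0 = (x k0 - 1) + 1 := by omega
        calc A j k0 * x k0 = A j k0 * ((x k0 - 1) + 1) := by rw [← hx1]
        _ = A j k0 * (x k0 - 1) + A j k0 := by ring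
      rw [h4, h5]
      ring
    have hβ' : ∀ j, ∑ k, A j k * x' k ≤ β j := fun j => by
      have h1 := key j; have h2 := hβ j; omega
    obtain ⟨y', hy', hmul'⟩ := IH x' hx'sum hβ'
    by_cases h0 : ∀ j, A j k0 = 0
    · refine ⟨y', hy', ?_⟩
      have hbb : (fun j => ∑ k, A j k * x k) = (fun j => ∑ k, A j k * x' k) := by
        funext j
        have h1 := key j
        rw [h0 j] at h1
        omega
      rw [hbb]
      exact hmul'
    · push_neg at h0
      obtain ⟨j1, hj1⟩ := h0
      have hc0b : ∀ j, (∑ k, A j k * x' k) ≤ β j - A j k0 := fun j => by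
        have h1 := key j; have h2 := hβ j; have h3 := hA k0 j; omega
      set c0 : ColIdx m n β A := ⟨k0, fun j => ⟨∑ k, A j k * x' k, Nat.lt_succ_of_le (hc0b j)⟩⟩ with hc0def
      refine ⟨fun c => y' c + (if c = c0 then 1 else 0), fun c => ?_, ?_⟩
      · exact add_nonneg (hy' c) (by split_ifs <;> norm_num)
      · have hsplity : (fun c => y' c + (if c = c0 then (1:ℝ) else 0))
            = y' + (fun c => if c = c0 then (1:ℝ) else 0) := rfl
        rw [hsplity, Matrix.mulVec_add, hmul']
        funext w
        have hmve : (theta m n β A).mulVec (fun c => if c = c0 then (1:ℝ) else 0) w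
            = theta m n β A w c0 := by
          simp [Matrix.mulVec, dotProduct, mul_ite, mul_one, mul_zero]
        have htc0 : theta m n β A w c0
            = if (fun j => ((w j : ℕ))) = (fun j => ∑ k, A j k * x' k) then (-1:ℝ)
              else if (fun j => ((w j : ℕ))) = (fun j => (∑ k, A j k * x' k) + A j k0) then 1
              else 0 := rfl
        have hbbeq : (fun j => ∑ k, A j k * x k) = (fun j => (∑ k, A j k * x' k) + A j k0) := by
          funext j; have := key j; omega
        simp only [Pi.add_apply, hmve, htc0, bvec, hbbeq]
        have hne : (fun j => ∑ k, A j k * x' k) ≠ (fun j => (∑ k, A j k * x' k) + A j k0) := by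
          intro h
          have := congrFun h j1
          omega
        by_cases h1 : (fun j => ((w j : ℕ))) = (fun j => ∑ k, A j k * x' k)
        · have h2 : ¬ ((fun j => ((w j : ℕ))) = (fun j => (∑ k, A j k * x' k) + A j k0)) :=
            fun h => hne (h1.symm.trans h)
          rw [if_pos h1, if_neg h2, if_pos h1]
          ring
        · rw [if_neg h1, if_neg h1]
          by_cases h2 : (fun j => ((w j : ℕ))) = (fun j => (∑ k, A j k * x' k) + A j k0)
          · rw [if_pos h2]; ring
          · rw [if_neg h2]; ring

lemma col_coe_le (m n : ℕ) (A : Matrix (Fin m) (Fin n) ℕ) (β : Fin m → ℕ)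
    (c : ColIdx m n β A) (j : Fin m) : (c.2 j : ℕ) ≤ β j - A j c.1 :=
  Nat.lt_succ_iff.mp (c.2 j).isLt

lemma zero_col (m n : ℕ) (A : Matrix (Fin m) (Fin n) ℕ) (β b : Fin m → ℕ)
    (hb : ∀ j, b j ≤ β j) (hA : ∀ k j, A j k ≤ β j)
    (y : ColIdx m n β A → ℝ) (hy : ∀ c, 0 ≤ y c)
    (hmul : (theta m n β A).mulVec y = bvec m β b) :
    ∀ c, (∀ j, A j c.1 = 0) → y c = 0 := by
  have hS1 : ∑ w : RowIdx m β, (theta m n β A).mulVec y w = 0 := by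
    rw [hmul]
    unfold bvec
    rw [Finset.sum_sub_distrib, sum_if_coe b hb 1,
      sum_if_coe (fun _ => 0) (fun j => Nat.zero_le _) 1]
    ring
  have colsum : ∀ c : ColIdx m n β A,
      ∑ w : RowIdx m β, theta m n β A w c = if ∀ j, A j c.1 = 0 then (-1:ℝ) else 0 := by
    intro c
    have hufβ : ∀ j, (c.2 j : ℕ) ≤ β j :=
      fun j => le_trans (col_coe_le m n A β c j) (Nat.sub_le _ _)
    have hvfβ : ∀ j, (c.2 j : ℕ) + A j c.1 ≤ β j := fun j => by
      have h1 := col_coe_le m n A β c j; have := hA c.1 j; omega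
    by_cases h0 : ∀ j, A j c.1 = 0
    · rw [if_pos h0]
      have hQP : (fun j => (c.2 j : ℕ) + A j c.1) = (fun j => ((c.2 j : ℕ))) := by
        funext j; have := h0 j; omega
      calc ∑ w : RowIdx m β, theta m n β A w c
          = ∑ w : RowIdx m β,
            (if (fun j => ((w j : ℕ))) = (fun j => ((c.2 j : ℕ))) then (-1:ℝ) else 0) := by
            refine Finset.sum_congr rfl fun w _ => ?_
            simp only [theta, Matrix.of_apply, hQP]
            split_ifs <;> rfl
        _ = -1 := sum_if_coe _ hufβ _
    · rw [if_neg h0]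
      push_neg at h0
      obtain ⟨j1, hj1⟩ := h0
      have hPQ : (fun j => ((c.2 j : ℕ))) ≠ (fun j => (c.2 j : ℕ) + A j c.1) := by
        intro h; have := congrFun h j1; omega
      calc ∑ w : RowIdx m β, theta m n β A w c
          = ∑ w : RowIdx m β,
            ((if (fun j => ((w j : ℕ))) = (fun j => (c.2 j : ℕ) + A j c.1) then (1:ℝ) else 0)
              + (if (fun j => ((w j : ℕ))) = (fun j => ((c.2 j : ℕ))) then (-1:ℝ) else 0)) := by
            refine Finset.sum_congr rfl fun w _ => ?_
            simp only [theta, Matrix.of_apply]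
            by_cases h1 : (fun j => ((w j : ℕ))) = (fun j => ((c.2 j : ℕ)))
            · have h2 : ¬ ((fun j => ((w j : ℕ))) = (fun j => (c.2 j : ℕ) + A j c.1)) :=
                fun h => hPQ (h1.symm.trans h)
              rw [if_pos h1, if_pos h1, if_neg h2]; ring
            · rw [if_neg h1, if_neg h1]
              by_cases h2 : (fun j => ((w j : ℕ))) = (fun j => (c.2 j : ℕ) + A j c.1)
              · rw [if_pos h2]; ring
              · rw [if_neg h2]; ring
        _ = 0 := by
            rw [Finset.sum_add_distrib, sum_if_coe _ hvfβ (1:ℝ), sum_if_coe _ hufβ (-1:ℝ)]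
            ring
  have hS2 : ∑ w : RowIdx m β, (theta m n β A).mulVec y w
      = ∑ c : ColIdx m n β A, (if ∀ j, A j c.1 = 0 then (-1:ℝ) else 0) * y c := by
    simp only [Matrix.mulVec, dotProduct]
    rw [Finset.sum_comm]
    exact Finset.sum_congr rfl fun c _ => by rw [← Finset.sum_mul, colsum c]
  have hsum0 : ∑ c ∈ Finset.univ.filter (fun c : ColIdx m n β A => ∀ j, A j c.1 = 0), y c = 0 := by
    have h := hS1
    rw [hS2] at h
    have h3 : ∑ c : ColIdx m n β A, (if ∀ j, A j c.1 = 0 then (-1:ℝ) else 0) * y c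
        = -∑ c ∈ Finset.univ.filter (fun c : ColIdx m n β A => ∀ j, A j c.1 = 0), y c := by
      rw [Finset.sum_filter, ← Finset.sum_neg_distrib]
      refine Finset.sum_congr rfl fun c _ => ?_
      split_ifs <;> ring
    rw [h3] at h
    linarith
  intro c hc
  exact (Finset.sum_eq_zero_iff_of_nonneg (fun c _ => hy c)).mp hsum0 c (by simp [hc])

lemma diverg (m n : ℕ) (A : Matrix (Fin m) (Fin n) ℕ) (β : Fin m → ℕ)
    (y : ColIdx m n β A → ℝ)
    (hzero : ∀ c : ColIdx m n β A, (∀ j, A j c.1 = 0) → y c = 0) (w : RowIdx m β) :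
    (theta m n β A).mulVec y w =
      (∑ c : ColIdx m n β A,
        if (fun j => ((w j : ℕ))) = (fun j => (c.2 j : ℕ) + A j c.1) then y c else 0)
      - (∑ c : ColIdx m n β A,
        if (fun j => ((w j : ℕ))) = (fun j => ((c.2 j : ℕ))) then y c else 0) := by
  simp only [Matrix.mulVec, dotProduct]
  rw [← Finset.sum_sub_distrib]
  refine Finset.sum_congr rfl fun c _ => ?_
  by_cases h0 : ∀ j, A j c.1 = 0
  · rw [hzero c h0]
    simp
  · push_neg at h0
    obtain ⟨j1, hj1⟩ := h0
    simp only [theta, Matrix.of_apply]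
    have hPQ : (fun j => ((c.2 j : ℕ))) ≠ (fun j => (c.2 j : ℕ) + A j c.1) := by
      intro h; have := congrFun h j1; omega
    by_cases h1 : (fun j => ((w j : ℕ))) = (fun j => ((c.2 j : ℕ)))
    · have h2 : ¬ ((fun j => ((w j : ℕ))) = (fun j => (c.2 j : ℕ) + A j c.1)) :=
        fun h => hPQ (h1.symm.trans h)
      rw [if_pos h1, if_pos h1, if_neg h2]; ring
    · rw [if_neg h1, if_neg h1]
      by_cases h2 : (fun j => ((w j : ℕ))) = (fun j => (c.2 j : ℕ) + A j c.1)
      · rw [if_pos h2, if_pos h2]; ring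
      · rw [if_neg h2, if_neg h2]; ring

lemma reach (m n : ℕ) (A : Matrix (Fin m) (Fin n) ℕ) (β b : Fin m → ℕ)
    (hb : ∀ j, b j ≤ β j) (hA : ∀ k j, A j k ≤ β j)
    (y : ColIdx m n β A → ℝ) (hy : ∀ c, 0 ≤ y c)
    (hmul : (theta m n β A).mulVec y = bvec m β b)
    (hzero : ∀ c : ColIdx m n β A, (∀ j, A j c.1 = 0) → y c = 0) :
    ∀ (t : ℕ) (w : Fin m → ℕ), (∀ j, w j ≤ β j) →
      (∑ j, (β j - w j)) ≤ t →
      (w = b ∨ 0 < ∑ c : ColIdx m n β A,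
        (if w = (fun j => ((c.2 j : ℕ))) then y c else 0)) →
      ∃ x : Fin n → ℕ, ∀ j, w j + ∑ k, A j k * x k = b j := by
  intro t
  induction t using Nat.strong_induction_on with
  | _ t IH =>
  intro w hw hmeas hcase
  rcases hcase with rfl | hout
  · exact ⟨0, fun j => by simp⟩
  · obtain ⟨c, _, hc⟩ := Finset.exists_lt_of_sum_lt
      (f := fun _ : ColIdx m n β A => (0:ℝ))
      (g := fun c => if w = (fun j => ((c.2 j : ℕ))) then y c else 0)
      (by simpa using hout)
    have hcw : w = (fun j => ((c.2 j : ℕ))) := by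
      by_contra h
      rw [if_neg h] at hc
      exact lt_irrefl 0 hc
    have hyc : 0 < y c := by rwa [if_pos hcw] at hc
    have hk : ¬ ∀ j, A j c.1 = 0 := fun h => by
      have := hzero c h; linarith
    push_neg at hk
    obtain ⟨j1, hj1⟩ := hk
    set w' : Fin m → ℕ := fun j => w j + A j c.1 with hw'def
    have hw' : ∀ j, w' j ≤ β j := fun j => by
      have h1 := col_coe_le m n A β c j
      have h2 := congrFun hcw j
      have h3 := hA c.1 j
      simp only [hw'def]
      omega
    have hxk : ∀ j, ∑ k', A j k' * (if k' = c.1 then 1 else 0) = A j c.1 := by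
      intro j
      simp [mul_ite, mul_one, mul_zero, Finset.sum_ite_eq']
    by_cases hwb : w' = b
    · refine ⟨fun k' => if k' = c.1 then 1 else 0, fun j => ?_⟩
      rw [hxk j]
      have := congrFun hwb j
      simpa [hw'def] using this
    · have hw'0 : w' ≠ (fun _ => (0:ℕ)) := by
        intro h
        have := congrFun h j1
        simp [hw'def] at this
        omega
      have hdiv := diverg m n A β y hzero (rowOf β w' hw')
      rw [hmul] at hdiv
      have hbv : bvec m β b (rowOf β w' hw') = 0 := by
        unfold bvec
        rw [coe_rowOf, if_neg hwb, if_neg hw'0]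
        ring
      rw [hbv, coe_rowOf] at hdiv
      have hIN : 0 < ∑ c' : ColIdx m n β A,
          (if w' = (fun j => (c'.2 j : ℕ) + A j c'.1) then y c' else 0) := by
        have hcond : w' = (fun j => ((c.2 j : ℕ)) + A j c.1) := by
          funext j
          have := congrFun hcw j
          simp only [hw'def, this]
        have hterm : (if w' = (fun j => ((c.2 j : ℕ)) + A j c.1) then y c else 0) = y c :=
          if_pos hcond
        calc (0:ℝ) < y c := hyc
          _ = _ := hterm.symm
          _ ≤ _ := Finset.single_le_sum
              (f := fun c' : ColIdx m n β A =>
                if w' = (fun j => (c'.2 j : ℕ) + A j c'.1) then y c' else 0)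
              (fun c' _ => by split_ifs; exacts [hy c', le_refl 0]) (Finset.mem_univ c)
      have hOUT' : 0 < ∑ c' : ColIdx m n β A,
          (if w' = (fun j => ((c'.2 j : ℕ))) then y c' else 0) := by linarith
      have hlt : ∑ j, (β j - w' j) < ∑ j, (β j - w j) := by
        refine Finset.sum_lt_sum (fun j _ => ?_) ⟨j1, Finset.mem_univ j1, ?_⟩
        · have h1 := hw' j
          have h2 : w' j = w j + A j c.1 := rfl
          omega
        · have h1 := hw' j1
          have h2 : w' j1 = w j1 + A j1 c.1 := rfl
          omega
      obtain ⟨x', hx'⟩ := IH (∑ j, (β j - w' j)) (lt_of_lt_of_le hlt hmeas) w' hw'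
        le_rfl (Or.inr hOUT')
      refine ⟨fun k' => x' k' + (if k' = c.1 then 1 else 0), fun j => ?_⟩
      have hs : ∑ k', A j k' * (x' k' + if k' = c.1 then 1 else 0)
          = (∑ k', A j k' * x' k') + A j c.1 := by
        rw [← hxk j, ← Finset.sum_add_distrib]
        exact Finset.sum_congr rfl fun k' _ => by ring
      rw [hs]
      have h2 := hx' j
      simp only [hw'def] at h2
      omega

/-- `Ax = b` has a solution `x ∈ ℕ^n` iff `Θ 𝐲 = 𝐛` for some real vector `𝐲 ≥ 0`. -/
theorem stmt_5 (m n : ℕ) (hm : 0 < m) (hn : 0 < n)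
    (A : Matrix (Fin m) (Fin n) ℕ) (β b : Fin m → ℕ)
    (hb : ∀ j, b j ≤ β j) (hA : ∀ k j, A j k ≤ β j) :
    (∃ x : Fin n → ℕ, ∀ j, ∑ k, A j k * x k = b j) ↔
    (∃ y : ColIdx m n β A → ℝ, (∀ c, 0 ≤ y c) ∧
      (theta m n β A).mulVec y = bvec m β b) := by
  constructor
  · rintro ⟨x, hxe⟩
    have hβx : ∀ j, ∑ k, A j k * x k ≤ β j := fun j => by rw [hxe j]; exact hb j
    obtain ⟨y, hy, hmul⟩ := forward_aux m n A β hA (∑ k, x k) x rfl hβx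
    refine ⟨y, hy, ?_⟩
    rw [hmul, show (fun j => ∑ k, A j k * x k) = b from funext hxe]
  · rintro ⟨y, hy, hmul⟩
    have hzero := zero_col m n A β b hb hA y hy hmul
    have hdisj : ((fun _ : Fin m => (0:ℕ)) = b) ∨
        0 < ∑ c : ColIdx m n β A,
          (if (fun _ : Fin m => (0:ℕ)) = (fun j => ((c.2 j : ℕ))) then y c else 0) := by
      by_cases h0b : (fun _ : Fin m => (0:ℕ)) = b
      · exact Or.inl h0b
      · right
        have hdiv := diverg m n A β y hzero (rowOf β (fun _ => 0) (fun j => Nat.zero_le _))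
        rw [hmul] at hdiv
        have hbv : bvec m β b (rowOf β (fun _ => 0) (fun j => Nat.zero_le _)) = -1 := by
          unfold bvec
          rw [coe_rowOf, if_neg h0b, if_pos rfl]
          ring
        rw [hbv, coe_rowOf] at hdiv
        have hINnn : 0 ≤ ∑ c : ColIdx m n β A,
            (if (fun _ : Fin m => (0:ℕ)) = (fun j => (c.2 j : ℕ) + A j c.1) then y c else 0) :=
          Finset.sum_nonneg fun c _ => by split_ifs; exacts [hy c, le_refl 0]
        linarith
    obtain ⟨x, hx⟩ := reach m n A β b hb hA y hy hmul hzero (∑ j, β j) (fun _ => 0)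
      (fun j => Nat.zero_le _) (by simp) hdisj
    exact ⟨x, fun j => by have := hx j; simpa using this⟩
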